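/- Let 𝕂 = ℝ or ℂ and let A be an n×n lower triangular matrix over 𝕂 such that all of the entries of A on the main diagonal and on the first column are non-zero, all other entries of A are zero, and the diagonal entries satisfy 0 < |A_1| < |A_2| < … < |A_n|. Then the matrix A_1⁻¹A − I + Δ is invertible and every entry on the first column of (A_1⁻¹A − I + Δ)⁻¹ is non-zero. -/

import Mathlib

open Matrix

/-- **Genericity of condition (ii).** Let `𝕂 = ℝ` or `ℂ` and let `A` be an `n × n`
lower triangular matrix over `𝕂` whose diagonal entries and first-column entries are
all non-zero, all other entries are zero, and whose diagonal entries satisfy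
`0 < |A_1| < |A_2| < … < |A_n|`. Then `A_1⁻¹A − I + Δ` is invertible and every entry
on the first column of `(A_1⁻¹A − I + Δ)⁻¹` is non-zero, where `Δ` has a `1` in
position `(1,1)` and zeros elsewhere. -/
theorem stmt_14 {𝕂 : Type*} [RCLike 𝕂] {n : ℕ} (hn : 0 < n)
    (A : Matrix (Fin n) (Fin n) 𝕂)
    (hdiag : ∀ i : Fin n, A i i ≠ 0)
    (hfirst : ∀ i : Fin n, A i ⟨0, hn⟩ ≠ 0)
    (hzero : ∀ i j : Fin n, j ≠ i → j ≠ ⟨0, hn⟩ → A i j = 0)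
    (hpos : 0 < ‖A ⟨0, hn⟩ ⟨0, hn⟩‖)
    (hmono : StrictMono fun i : Fin n => ‖A i i‖) :
    IsUnit ((A ⟨0, hn⟩ ⟨0, hn⟩)⁻¹ • A - 1 +
        Matrix.single (⟨0, hn⟩ : Fin n) (⟨0, hn⟩ : Fin n) (1 : 𝕂)) ∧
      ∀ i : Fin n,
        (((A ⟨0, hn⟩ ⟨0, hn⟩)⁻¹ • A - 1 +
          Matrix.single (⟨0, hn⟩ : Fin n) (⟨0, hn⟩ : Fin n) (1 : 𝕂))⁻¹) i ⟨0, hn⟩ ≠ 0 := by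
  set z : Fin n := ⟨0, hn⟩ with hzdef
  set a : 𝕂 := A z z with hadef
  have ha0 : a ≠ 0 := hdiag z
  have hstd : ∀ i j : Fin n,
      Matrix.single z z (1 : 𝕂) i j = if z = i ∧ z = j then 1 else 0 :=
    fun i j => rfl
  set B : Matrix (Fin n) (Fin n) 𝕂 :=
    a⁻¹ • A - 1 + Matrix.single z z (1 : 𝕂) with hBdef
  have hBzz : B z z = 1 := by
    simp [hBdef, hstd, Matrix.one_apply, ← hadef, inv_mul_cancel₀ ha0]
  have hBdd : ∀ i : Fin n, i ≠ z → B i i = a⁻¹ * A i i - 1 := by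
    intro i hi
    have h' : ¬ z = i := fun h => hi h.symm
    simp [hBdef, hstd, Matrix.one_apply, hi, h']
  have hBd0 : ∀ i : Fin n, B i i ≠ 0 := by
    intro i
    by_cases hi : i = z
    · rw [hi, hBzz]; exact one_ne_zero
    · rw [hBdd i hi]
      rw [sub_ne_zero]
      intro h
      have hA : A i i = a := by
        field_simp at h
        exact h
      have : ‖A i i‖ = ‖A z z‖ := by rw [hA, hadef]
      exact hi (hmono.injective this)
  have hBi0 : ∀ i : Fin n, i ≠ z → B i z = a⁻¹ * A i z := by
    intro i hi
    have h' : ¬ z = i := fun h => hi h.symm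
    simp [hBdef, hstd, Matrix.one_apply, hi, h']
  have hBi0' : ∀ i : Fin n, i ≠ z → B i z ≠ 0 := by
    intro i hi
    rw [hBi0 i hi]
    exact mul_ne_zero (inv_ne_zero ha0) (hfirst i)
  have hBoff : ∀ i j : Fin n, j ≠ i → j ≠ z → B i j = 0 := by
    intro i j hji hjz
    have h' : ¬ z = j := fun h => hjz h.symm
    simp [hBdef, hstd, Matrix.one_apply, Ne.symm hji, h', hzero i j hji hjz]
  set C : Matrix (Fin n) (Fin n) 𝕂 := Matrix.of fun i j =>
    if i = j then (B i i)⁻¹ else if j = z then -(B i z) / (B i i) else 0 with hCdef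
  have hCzk : ∀ k : Fin n, C z k = if z = k then 1 else 0 := by
    intro k
    by_cases h : z = k
    · subst h
      simp [hCdef, hBzz]
    · by_cases h2 : k = z
      · exact absurd h2.symm h
      · simp [hCdef, h, h2]
  have hBC : B * C = 1 := by
    ext i k
    rw [Matrix.mul_apply]
    by_cases hi : i = z
    · subst hi
      rw [Finset.sum_eq_single_of_mem z (Finset.mem_univ z)
        (fun j _ hj => by rw [hBoff z j hj hj, zero_mul])]
      rw [hBzz, one_mul, hCzk k, Matrix.one_apply]
    · have hsub : ({i, z} : Finset (Fin n)) ⊆ Finset.univ := Finset.subset_univ _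
      rw [← Finset.sum_subset hsub (fun j _ hj => by
        simp only [Finset.mem_insert, Finset.mem_singleton, not_or] at hj
        rw [hBoff i j hj.1 hj.2, zero_mul])]
      rw [Finset.sum_insert (by simpa using hi), Finset.sum_singleton]
      rw [hCzk k]
      by_cases hk : k = i
      · subst hk
        rw [if_neg (Ne.symm hi), mul_zero, add_zero]
        simp [hCdef, mul_inv_cancel₀ (hBd0 k), Matrix.one_apply]
      · by_cases hkz : k = z
        · subst hkz
          rw [if_pos rfl, mul_one]
          have hC : C i z = -(B i z) / (B i i) := by
            simp [hCdef, hi]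
          rw [hC, Matrix.one_apply_ne (Ne.symm hk)]
          field_simp
          rw [div_self (hBd0 i), neg_add_cancel, mul_zero]
        · have hC : C i k = 0 := by
            simp [hCdef, Ne.symm hk, hkz]
          rw [hC, mul_zero, if_neg (fun h => hkz h.symm), mul_zero, add_zero,
            Matrix.one_apply_ne (Ne.symm hk)]
  have hinvB : B⁻¹ = C := Matrix.inv_eq_right_inv hBC
  refine ⟨(Matrix.isUnit_iff_isUnit_det B).mpr (Matrix.isUnit_det_of_right_inverse hBC), fun i => ?_⟩
  rw [hinvB]
  by_cases hi : i = z
  · subst hi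
    simp [hCdef, hBzz]
  · have hC : C i z = -(B i z) / (B i i) := by
      simp [hCdef, hi]
    rw [hC]
    exact div_ne_zero (neg_ne_zero.mpr (hBi0' i hi)) (hBd0 i)
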